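/- In the linear-quadratic control problem, the value-based optimal dual penalty has the exact closed form M*(α, z) = Σ_{n=0}^{N−1} {2(A_n x_n + B_n a_n)ᵀ K_{n+1} z_{n+1} + z_{n+1}ᵀ K_{n+1} z_{n+1} − E[z_{n+1}ᵀ K_{n+1} z_{n+1}]}, i.e., the martingale difference V_{n+1}(x_{n+1}) − E[V_{n+1}(x_{n+1})|x_n,a_n] equals 2(A_n x_n + B_n a_n)ᵀ K_{n+1} z_{n+1} + z_{n+1}ᵀ K_{n+1} z_{n+1} − E[z_{n+1}ᵀ K_{n+1} z_{n+1}] for each n. -/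
import Mathlib
set_option linter.unusedSectionVars false
open MeasureTheory Matrix

section aux
variable {d : ℕ} {μ : Measure (Fin d → ℝ)} [IsProbabilityMeasure μ]

lemma int_coord (hmom : Integrable (fun z : Fin d → ℝ => ‖z‖ ^ 2) μ) (j : Fin d) :
    Integrable (fun z : Fin d → ℝ => z j) μ := by
  have h1 : Integrable (fun z : Fin d → ℝ => 1 + ‖z‖ ^ 2) μ :=
    (integrable_const 1).add hmom
  refine h1.mono' (measurable_pi_apply j).aestronglyMeasurable ?_
  refine Filter.Eventually.of_forall fun z => ?_
  have h2 : |z j| ≤ ‖z‖ := by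
    simpa [Real.norm_eq_abs] using norm_le_pi_norm z j
  have h3 : (0:ℝ) ≤ ‖z‖ := norm_nonneg _
  simp only [Real.norm_eq_abs]
  nlinarith

lemma int_quad (hmom : Integrable (fun z : Fin d → ℝ => ‖z‖ ^ 2) μ)
    (K : Matrix (Fin d) (Fin d) ℝ) :
    Integrable (fun z : Fin d → ℝ => z ⬝ᵥ (K *ᵥ z)) μ := by
  have hEq : (fun z : Fin d → ℝ => z ⬝ᵥ (K *ᵥ z))
      = fun z => ∑ i, ∑ j, z i * (K i j * z j) := by
    funext z; simp [dotProduct, mulVec, Finset.mul_sum]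
  rw [hEq]
  refine integrable_finset_sum _ fun i _ => integrable_finset_sum _ fun j _ => ?_
  refine (hmom.const_mul |K i j|).mono'
    (((measurable_pi_apply i).mul ((measurable_pi_apply j).const_mul _)).aestronglyMeasurable) ?_
  refine Filter.Eventually.of_forall fun z => ?_
  have hi : |z i| ≤ ‖z‖ := by simpa [Real.norm_eq_abs] using norm_le_pi_norm z i
  have hj : |z j| ≤ ‖z‖ := by simpa [Real.norm_eq_abs] using norm_le_pi_norm z j
  have h3 : (0:ℝ) ≤ ‖z‖ := norm_nonneg _
  have : |z i * (K i j * z j)| = |z i| * (|K i j| * |z j|) := by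
    rw [abs_mul, abs_mul]
  simp only [Real.norm_eq_abs, this]
  nlinarith [mul_le_mul hi hj (abs_nonneg (z j)) h3, abs_nonneg (K i j),
    abs_nonneg (z i), abs_nonneg (z j)]

lemma int_lin (hmom : Integrable (fun z : Fin d → ℝ => ‖z‖ ^ 2) μ)
    (K : Matrix (Fin d) (Fin d) ℝ) (y : Fin d → ℝ) :
    Integrable (fun z : Fin d → ℝ => y ⬝ᵥ (K *ᵥ z)) μ := by
  have hEq : (fun z : Fin d → ℝ => y ⬝ᵥ (K *ᵥ z))
      = fun z => ∑ j, (y ᵥ* K) j * z j := by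
    funext z; rw [dotProduct_mulVec]; rfl
  rw [hEq]
  exact integrable_finset_sum _ fun j _ => (int_coord hmom j).const_mul _

lemma integral_lin (hmom : Integrable (fun z : Fin d → ℝ => ‖z‖ ^ 2) μ)
    (hmean : ∀ j : Fin d, ∫ z, z j ∂μ = 0)
    (K : Matrix (Fin d) (Fin d) ℝ) (y : Fin d → ℝ) :
    ∫ z, y ⬝ᵥ (K *ᵥ z) ∂μ = 0 := by
  have hEq : (fun z : Fin d → ℝ => y ⬝ᵥ (K *ᵥ z))
      = fun z => ∑ j, (y ᵥ* K) j * z j := by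
    funext z; rw [dotProduct_mulVec]; rfl
  rw [hEq, integral_finset_sum _ fun j _ => (int_coord hmom j).const_mul _]
  simp [MeasureTheory.integral_const_mul, hmean]

lemma expand_quad {K : Matrix (Fin d) (Fin d) ℝ} (hK : K.IsSymm) (y z : Fin d → ℝ) :
    (y + z) ⬝ᵥ (K *ᵥ (y + z))
      = y ⬝ᵥ (K *ᵥ y) + 2 * (y ⬝ᵥ (K *ᵥ z)) + z ⬝ᵥ (K *ᵥ z) := by
  have hzy : z ⬝ᵥ (K *ᵥ y) = y ⬝ᵥ (K *ᵥ z) := by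
    rw [dotProduct_mulVec, ← mulVec_transpose, hK.eq, dotProduct_comm]
  simp only [mulVec_add, add_dotProduct, dotProduct_add, hzy]
  ring

end aux



open MeasureTheory Matrix

/-- **Exact optimal dual penalty for LQC.** With quadratic value functions
`Vₙ(x) = xᵀKₙx + cₙ` (as delivered by the Riccati recursion) and dynamics
`x_{n+1} = Aₙxₙ + Bₙaₙ + z_{n+1}` with zero-mean noise, each martingale difference equals
`2(Aₙxₙ + Bₙaₙ)ᵀK_{n+1}z_{n+1} + z_{n+1}ᵀK_{n+1}z_{n+1} − E[zᵀK_{n+1}z]`; hence the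
value-based optimal dual penalty `M*(α,z)` has this exact closed form summed over `n`. -/
theorem lqc_optimal_penalty_closed_form {d N : ℕ} {mA : ℕ}
    (A : ℕ → Matrix (Fin d) (Fin d) ℝ) (B : ℕ → Matrix (Fin d) (Fin mA) ℝ)
    (K : ℕ → Matrix (Fin d) (Fin d) ℝ) (hKsymm : ∀ n, (K n).IsSymm)
    (c : ℕ → ℝ)
    (V : ℕ → (Fin d → ℝ) → ℝ)
    (hV : ∀ n x, V n x = x ⬝ᵥ (K n *ᵥ x) + c n)
    (μ : Measure (Fin d → ℝ)) [IsProbabilityMeasure μ]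
    (hmean : ∀ j : Fin d, ∫ z, z j ∂μ = 0)
    (hmom : Integrable (fun z : Fin d → ℝ => ‖z‖ ^ 2) μ) :
    -- per-step identity for the martingale difference
    (∀ n < N, ∀ (x : Fin d → ℝ) (a : Fin mA → ℝ) (z : Fin d → ℝ),
      V (n + 1) (A n *ᵥ x + B n *ᵥ a + z) -
          ∫ ζ, V (n + 1) (A n *ᵥ x + B n *ᵥ a + ζ) ∂μ
        = 2 * ((A n *ᵥ x + B n *ᵥ a) ⬝ᵥ (K (n + 1) *ᵥ z)) +
            z ⬝ᵥ (K (n + 1) *ᵥ z) - ∫ ζ, ζ ⬝ᵥ (K (n + 1) *ᵥ ζ) ∂μ) ∧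
    -- hence the summed optimal dual penalty has the closed form
    (∀ (x : ℕ → Fin d → ℝ) (aAct : ℕ → Fin mA → ℝ) (z : ℕ → Fin d → ℝ),
      (∀ n, x (n + 1) = A n *ᵥ x n + B n *ᵥ aAct n + z (n + 1)) →
      ∑ n ∈ Finset.range N,
          (V (n + 1) (x (n + 1)) -
            ∫ ζ, V (n + 1) (A n *ᵥ x n + B n *ᵥ aAct n + ζ) ∂μ)
        = ∑ n ∈ Finset.range N,
            (2 * ((A n *ᵥ x n + B n *ᵥ aAct n) ⬝ᵥ (K (n + 1) *ᵥ z (n + 1))) +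
              z (n + 1) ⬝ᵥ (K (n + 1) *ᵥ z (n + 1)) -
              ∫ ζ, ζ ⬝ᵥ (K (n + 1) *ᵥ ζ) ∂μ)) := by
  have step : ∀ (n : ℕ) (x : Fin d → ℝ) (a : Fin mA → ℝ) (z : Fin d → ℝ),
      V (n + 1) (A n *ᵥ x + B n *ᵥ a + z) -
          ∫ ζ, V (n + 1) (A n *ᵥ x + B n *ᵥ a + ζ) ∂μ
        = 2 * ((A n *ᵥ x + B n *ᵥ a) ⬝ᵥ (K (n + 1) *ᵥ z)) +
            z ⬝ᵥ (K (n + 1) *ᵥ z) - ∫ ζ, ζ ⬝ᵥ (K (n + 1) *ᵥ ζ) ∂μ := by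
    intro n x a z
    set y := A n *ᵥ x + B n *ᵥ a with hy
    have hint : ∫ ζ, V (n + 1) (y + ζ) ∂μ
        = (y ⬝ᵥ (K (n+1) *ᵥ y) + c (n+1)) + ∫ ζ, ζ ⬝ᵥ (K (n+1) *ᵥ ζ) ∂μ := by
      have hfun : (fun ζ : Fin d → ℝ => V (n + 1) (y + ζ))
          = fun ζ => (y ⬝ᵥ (K (n+1) *ᵥ y) + c (n+1))
              + (2 * (y ⬝ᵥ (K (n+1) *ᵥ ζ)) + ζ ⬝ᵥ (K (n+1) *ᵥ ζ)) := by
        funext ζ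
        rw [hV, expand_quad (hKsymm (n+1))]
        ring
      have hquad := int_quad hmom (K (n+1))
      have hlin2 : Integrable (fun ζ : Fin d → ℝ => 2 * (y ⬝ᵥ (K (n+1) *ᵥ ζ))) μ :=
        (int_lin hmom _ y).const_mul 2
      have hsum : Integrable
          (fun ζ : Fin d → ℝ => 2 * (y ⬝ᵥ (K (n+1) *ᵥ ζ)) + ζ ⬝ᵥ (K (n+1) *ᵥ ζ)) μ :=
        hlin2.add hquad
      rw [hfun, integral_add (integrable_const _) hsum, integral_add hlin2 hquad,
        integral_const]
      have hz : ∫ ζ, 2 * (y ⬝ᵥ (K (n+1) *ᵥ ζ)) ∂μ = 0 := by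
        rw [MeasureTheory.integral_const_mul, integral_lin hmom hmean, mul_zero]
      rw [hz]
      simp [measure_univ]
    rw [hV, expand_quad (hKsymm (n+1)) y z, hint]
    ring
  refine ⟨fun n _ => step n, fun x aAct z hdyn => ?_⟩
  refine Finset.sum_congr rfl fun n hn => ?_
  rw [hdyn n]
  exact step n (x n) (aAct n) (z (n+1))
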